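/- Let z = (A,B,x,y) ∈ M_n(ℂ) × M_n(ℂ) × ℂⁿ × (ℂⁿ)* satisfy the hyperkähler moment map equations [A,A*] + [B,B*] + x x* − y* y = t·Id with t > 0 and [A,B] + x y = 0. Then y = 0. -/

import Mathlib

open Matrix

namespace Nak
variable {n : ℕ} (A B : Matrix (Fin n) (Fin n) ℂ)
  (x : Matrix (Fin n) (Fin 1) ℂ) (y : Matrix (Fin 1) (Fin n) ℂ)

noncomputable def wp (w : List Bool) : Matrix (Fin n) (Fin n) ℂ :=
  (w.map (fun b => bif b then A else B)).prod

@[simp] lemma wp_nil : wp A B [] = 1 := rfl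
@[simp] lemma wp_cons (b w) : wp A B (b :: w) = (bif b then A else B) * wp A B w := by
  simp [wp]

lemma wp_append (u v) : wp A B (u ++ v) = wp A B u * wp A B v := by
  simp [wp]

lemma wp_replicate_true (a : ℕ) : wp A B (List.replicate a true) = A ^ a := by
  simp [wp, List.map_replicate, List.prod_replicate]

lemma wp_replicate_false (a : ℕ) : wp A B (List.replicate a false) = B ^ a := by
  simp [wp, List.map_replicate, List.prod_replicate]

noncomputable def c (w : List Bool) : ℂ := trace (y * wp A B w * x)

lemma trace_one_one (M N : Matrix (Fin 1) (Fin 1) ℂ) : trace (M * N) = trace M * trace N := by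
  simp [trace, mul_apply, Fin.sum_univ_one]

lemma c_swap (hBA : B * A = A * B + x * y) (u v : List Bool) (hcu : c A B x y u = 0) :
    c A B x y (u ++ false :: true :: v) = c A B x y (u ++ true :: false :: v) := by
  unfold c at *
  rw [wp_append, wp_append]
  simp only [wp_cons, Bool.cond_true, Bool.cond_false]
  rw [show B * (A * wp A B v) = (A * B + x * y) * wp A B v by rw [← hBA, Matrix.mul_assoc]]
  rw [show A * (B * wp A B v) = A * B * wp A B v by rw [Matrix.mul_assoc]]
  simp only [Matrix.mul_add, Matrix.add_mul, trace_add]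
  have h2 : y * (wp A B u * (x * y * wp A B v)) * x
      = (y * wp A B u * x) * (y * wp A B v * x) := by
    simp only [Matrix.mul_assoc]
  rw [h2, trace_one_one, hcu, zero_mul, add_zero]

lemma c_perm (hBA : B * A = A * B + x * y) (k : ℕ)
    (H : ∀ w : List Bool, w.length + 2 ≤ k → c A B x y w = 0) :
    ∀ {l l' : List Bool}, l.Perm l' → ∀ u : List Bool,
      (u ++ l).length = k → c A B x y (u ++ l) = c A B x y (u ++ l') := by
  intro l l' h
  induction h with
  | nil => intro u _; rfl
  | cons a h ih =>
      intro u hk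
      have h1 := ih (u ++ [a]) (by simpa using hk)
      simpa using h1
  | swap a b l =>
      intro u hk
      have hcu : c A B x y u = 0 := by
        refine H u ?_
        simp at hk; omega
      cases a <;> cases b
      · rfl
      · exact (c_swap A B x y hBA u l hcu).symm
      · exact c_swap A B x y hBA u l hcu
      · rfl
  | trans h₁ h₂ ih₁ ih₂ =>
      intro u hk
      rename_i l₁ l₂ l₃
      have hlen : (u ++ l₂).length = k := by
        have := h₁.length_eq
        simp only [List.length_append] at hk ⊢
        omega
      rw [ih₁ u hk, ih₂ u hlen]

lemma perm_sorted (w : List Bool) :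
    w.Perm (List.replicate (w.count true) true ++ List.replicate (w.count false) false) := by
  induction w with
  | nil => simp
  | cons b w ih =>
      cases b
      · refine (ih.cons false).trans ?_
        have h1 : (false :: w).count false = w.count false + 1 := by simp [List.count_cons]
        have h2 : (false :: w).count true = w.count true := by simp [List.count_cons]
        rw [h1, h2, List.replicate_succ]
        simpa using List.perm_middle.symm
      · refine (ih.cons true).trans ?_
        have h1 : (true :: w).count true = w.count true + 1 := by simp [List.count_cons]
        have h2 : (true :: w).count false = w.count false := by simp [List.count_cons]
        rw [h1, h2, List.replicate_succ, List.cons_append]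


lemma pow_expand (hBA : B * A = A * B + x * y) (b : ℕ) :
    B ^ b * A = A * B ^ b + ∑ i ∈ Finset.range b, B ^ i * (x * y) * B ^ (b - 1 - i) := by
  induction b with
  | zero => simp
  | succ b ih =>
      have h1 : B ^ (b + 1) * A = B * (B ^ b * A) := by rw [pow_succ', mul_assoc]
      rw [h1, ih, mul_add, Finset.mul_sum]
      have h2 : B * (A * B ^ b) = A * B ^ (b + 1) + x * y * B ^ b := by
        rw [← mul_assoc, hBA, add_mul, mul_assoc, ← pow_succ']
      rw [h2]
      rw [Finset.sum_range_succ']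
      have h3 : ∀ i, B * (B ^ i * (x * y) * B ^ (b - 1 - i))
          = B ^ (i + 1) * (x * y) * B ^ (b + 1 - 1 - (i + 1)) := by
        intro i
        have : b + 1 - 1 - (i + 1) = b - 1 - i := by omega
        rw [this, ← mul_assoc, ← mul_assoc, ← pow_succ']
      simp only [h3]
      have h4 : B ^ 0 * (x * y) * B ^ (b + 1 - 1 - 0) = x * y * B ^ b := by
        simp
      rw [h4]
      abel


theorem c_zero (hc : A * B - B * A + x * y = 0) : ∀ w, c A B x y w = 0 := by
  have hxy : x * y = B * A - A * B := by
    have h := eq_neg_of_add_eq_zero_right hc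
    rw [neg_sub] at h
    exact h
  have hBA : B * A = A * B + x * y := by rw [hxy]; abel
  suffices H : ∀ k (w : List Bool), w.length = k → c A B x y w = 0 by
    intro w; exact H w.length w rfl
  intro k
  induction k using Nat.strong_induction_on with
  | _ k IH =>
  intro w hw
  have H2 : ∀ u : List Bool, u.length + 2 ≤ k → c A B x y u = 0 := by
    intro u hu; exact IH u.length (by omega) u rfl
  set a := w.count true with ha
  set b := w.count false with hb
  have hlen : a + b = k := by
    have h := (perm_sorted w).length_eq
    simp only [List.length_append, List.length_replicate] at h
    omega
  have hsort : ∀ u : List Bool, u.length = k → u.count true = a → u.count false = b →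
      c A B x y u = c A B x y (List.replicate a true ++ List.replicate b false) := by
    intro u hu h1 h2
    have h3 := c_perm A B x y hBA k H2 (perm_sorted u) [] (by simpa using hu)
    rw [h1, h2] at h3
    simpa using h3
  rw [hsort w hw rfl rfl]
  set s := c A B x y (List.replicate a true ++ List.replicate b false) with hs
  have e1 : s = trace (A ^ a * B ^ b * (x * y)) := by
    rw [hs]; unfold c
    rw [wp_append, wp_replicate_true, wp_replicate_false]
    rw [Matrix.trace_mul_comm, ← Matrix.mul_assoc, Matrix.trace_mul_comm]
  have e3 : trace (A ^ a * B ^ b * (B * A)) = trace (A ^ (a+1) * B ^ (b+1)) := by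
    have h : A ^ a * B ^ b * (B * A) = A ^ a * B ^ (b+1) * A := by
      rw [pow_succ]; simp only [mul_assoc]
    rw [h, Matrix.trace_mul_comm]
    rw [← mul_assoc, ← pow_succ']
  have e4 : trace (A ^ a * B ^ b * (A * B))
      = trace (A ^ (a+1) * B ^ (b+1))
        + ∑ i ∈ Finset.range b, trace (A ^ a * (B ^ i * (x * y) * B ^ (b - 1 - i)) * B) := by
    have h : A ^ a * B ^ b * (A * B) = A ^ a * (B ^ b * A) * B := by
      simp only [mul_assoc]
    rw [h, pow_expand A B x y hBA b, mul_add, add_mul, Finset.mul_sum, Finset.sum_mul,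
      trace_add, Matrix.trace_sum]
    congr 1
    have h2 : A ^ a * (A * B ^ b) * B = A ^ (a+1) * B ^ (b+1) := by
      rw [← mul_assoc, ← pow_succ, mul_assoc, ← pow_succ]
    rw [h2]
  have e5 : ∀ i ∈ Finset.range b,
      trace (A ^ a * (B ^ i * (x * y) * B ^ (b - 1 - i)) * B) = s := by
    intro i hi
    have hib : i < b := Finset.mem_range.mp hi
    have hterm : A ^ a * (B ^ i * (x * y) * B ^ (b - 1 - i)) * B
        = (A ^ a * (B ^ i * x)) * (y * B ^ (b - i)) := by
      have hbb : B ^ (b - 1 - i) * B = B ^ (b - i) := by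
        rw [← pow_succ]
        congr 1
        omega
      rw [← hbb]
      simp only [Matrix.mul_assoc]
    rw [hterm, Matrix.trace_mul_comm]
    have hword : c A B x y
        (List.replicate (b - i) false ++ (List.replicate a true ++ List.replicate i false))
        = trace (y * B ^ (b - i) * (A ^ a * (B ^ i * x))) := by
      unfold c
      rw [wp_append, wp_append, wp_replicate_true, wp_replicate_false, wp_replicate_false]
      simp only [Matrix.mul_assoc]
    rw [← hword]
    apply hsort
    · simp only [List.length_append, List.length_replicate]; omega
    · simp [List.count_append, List.count_replicate]
    · simp only [List.count_append, List.count_replicate]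
      norm_num
      omega
  have e6' : trace (A ^ a * B ^ b * (x * y)) = -(b : ℂ) * s := by
    rw [hxy, mul_sub, trace_sub, e3, e4, Finset.sum_congr rfl e5, Finset.sum_const,
      Finset.card_range, nsmul_eq_mul]
    ring
  have e6 : s = -(b : ℂ) * s := e1.trans e6'
  have hb1 : ((1 : ℂ) + (b : ℂ)) ≠ 0 := by
    have : ((1 + b : ℕ) : ℂ) ≠ 0 := Nat.cast_ne_zero.mpr (by omega)
    push_cast at this
    exact this
  have : ((1 : ℂ) + (b : ℂ)) * s = 0 := by linear_combination e6
  rcases mul_eq_zero.mp this with h | h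
  · exact absurd h hb1
  · exact h

theorem word_lemma (hc : A * B - B * A + x * y = 0) (w : List Bool) :
    y * wp A B w * x = 0 := by
  have h := c_zero A B x y hc w
  unfold c at h
  ext i j
  fin_cases i; fin_cases j
  simpa [trace, Fin.sum_univ_one] using h

end Nak
namespace Nak

noncomputable def fR {I J : Type*} [Fintype I] [Fintype J] (M : Matrix I J ℂ) : ℝ :=
  ∑ i, ∑ j, Complex.normSq (M i j)

lemma fR_nonneg {I J : Type*} [Fintype I] [Fintype J] (M : Matrix I J ℂ) : 0 ≤ fR M := by
  apply Finset.sum_nonneg; intro i _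
  apply Finset.sum_nonneg; intro j _
  exact Complex.normSq_nonneg _

lemma eq_zero_of_fR {I J : Type*} [Fintype I] [Fintype J] (M : Matrix I J ℂ)
    (h : fR M = 0) : M = 0 := by
  ext i j
  have h1 : ∀ i ∈ Finset.univ, (0:ℝ) ≤ ∑ j, Complex.normSq (M i j) := by
    intro i _
    exact Finset.sum_nonneg fun j _ => Complex.normSq_nonneg _
  have h2 := (Finset.sum_eq_zero_iff_of_nonneg h1).mp h i (Finset.mem_univ i)
  have h3 := (Finset.sum_eq_zero_iff_of_nonneg
    (fun j _ => Complex.normSq_nonneg (M i j))).mp h2 j (Finset.mem_univ j)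
  simpa using Complex.normSq_eq_zero.mp h3

lemma trace_conjTranspose_mul {I J : Type*} [Fintype I] [Fintype J] (M : Matrix I J ℂ) :
    trace (Mᴴ * M) = (fR M : ℂ) := by
  simp only [trace, Matrix.diag, mul_apply, conjTranspose_apply, fR]
  push_cast
  rw [Finset.sum_comm]
  congr 1; ext i; congr 1; ext j
  exact (Complex.normSq_eq_conj_mul_self).symm

end Nak

set_option maxHeartbeats 1000000
namespace Nak2
open Nak

variable {n : ℕ}

lemma proj_one (t : ℝ) (ht : 0 < t)
    (A B P : Matrix (Fin n) (Fin n) ℂ)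
    (x : Matrix (Fin n) (Fin 1) ℂ) (y : Matrix (Fin 1) (Fin n) ℂ)
    (hreal : A * Aᴴ - Aᴴ * A + (B * Bᴴ - Bᴴ * B) + x * xᴴ - yᴴ * y
      = (t : ℂ) • (1 : Matrix (Fin n) (Fin n) ℂ))
    (hP2 : P * P = P) (hPH : Pᴴ = P) (hPx : P * x = x)
    (hPA : P * (A * P) = A * P) (hPB : P * (B * P) = B * P) :
    P = 1 := by
  set Q : Matrix (Fin n) (Fin n) ℂ := 1 - P with hQ
  have hPQ1 : P + Q = 1 := by rw [hQ]; abel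
  have hQH : Qᴴ = Q := by rw [hQ, conjTranspose_sub, conjTranspose_one, hPH]
  have hPQ : P * Q = 0 := by rw [hQ, Matrix.mul_sub, Matrix.mul_one, hP2, sub_self]
  have hQP : Q * P = 0 := by rw [hQ, Matrix.sub_mul, Matrix.one_mul, hP2, sub_self]
  have hQ2 : Q * Q = Q := by
    rw [hQ, Matrix.sub_mul, Matrix.one_mul, Matrix.mul_sub, Matrix.mul_one, hP2]
    abel
  have hQx : Q * x = 0 := by rw [hQ, Matrix.sub_mul, Matrix.one_mul, hPx, sub_self]
  -- invariance consequences
  have hQAP : Q * (A * P) = 0 := by rw [hQ, Matrix.sub_mul, Matrix.one_mul, hPA, sub_self]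
  have hQBP : Q * (B * P) = 0 := by rw [hQ, Matrix.sub_mul, Matrix.one_mul, hPB, sub_self]
  have hQAQ : Q * A * Q = Q * A := by
    have : Q * A * (P + Q) = Q * A := by rw [hPQ1, Matrix.mul_one]
    rw [Matrix.mul_add] at this
    rw [Matrix.mul_assoc] at this
    rw [hQAP, zero_add] at this
    exact this
  have hQBQ : Q * B * Q = Q * B := by
    have : Q * B * (P + Q) = Q * B := by rw [hPQ1, Matrix.mul_one]
    rw [Matrix.mul_add] at this
    rw [Matrix.mul_assoc] at this
    rw [hQBP, zero_add] at this
    exact this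
  have hPAQ0 : P * (Aᴴ * Q) = 0 := by
    have h := congrArg conjTranspose hQAP
    simp only [conjTranspose_mul, hQH, hPH, conjTranspose_zero] at h
    rw [← Matrix.mul_assoc]
    exact h
  have hPBQ0 : P * (Bᴴ * Q) = 0 := by
    have h := congrArg conjTranspose hQBP
    simp only [conjTranspose_mul, hQH, hPH, conjTranspose_zero] at h
    rw [← Matrix.mul_assoc]
    exact h
  have hAQ : Aᴴ * Q = Q * (Aᴴ * Q) := by
    conv_lhs => rw [← Matrix.one_mul (Aᴴ * Q), ← hPQ1, Matrix.add_mul, hPAQ0, zero_add]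
  have hBQ : Bᴴ * Q = Q * (Bᴴ * Q) := by
    conv_lhs => rw [← Matrix.one_mul (Bᴴ * Q), ← hPQ1, Matrix.add_mul, hPBQ0, zero_add]
  -- trace identities
  have e1 : ∀ (C : Matrix (Fin n) (Fin n) ℂ), Q * C * Q = Q * C → Cᴴ * Q = Q * (Cᴴ * Q) →
      trace (Q * (C * Cᴴ) * Q) = (fR (Q * (C * Q)) : ℂ) := by
    intro C hQCQ hCQ
    have hN : (Q * (C * Q))ᴴ = Q * (Cᴴ * Q) := by
      simp only [conjTranspose_mul, hQH, Matrix.mul_assoc]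
    have hmat : Q * (C * Cᴴ) * Q = (Q * (C * Q)) * (Q * (C * Q))ᴴ := by
      rw [hN, ← hCQ]
      have h1 : Q * (C * Q) = Q * C := by rw [← Matrix.mul_assoc]; exact hQCQ
      rw [h1]
      simp only [Matrix.mul_assoc]
    rw [hmat, Matrix.trace_mul_comm, trace_conjTranspose_mul]
  have e2 : ∀ (C : Matrix (Fin n) (Fin n) ℂ), P * (Cᴴ * Q) = 0 →
      trace (Q * (Cᴴ * C) * Q)
        = (fR (P * (C * Q)) : ℂ) + (fR (Q * (C * Q)) : ℂ) := by
    intro C hPCQ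
    have hmat : Q * (Cᴴ * C) * Q = (C * Q)ᴴ * (C * Q) := by
      simp only [conjTranspose_mul, hQH, Matrix.mul_assoc]
    have hsplit : C * Q = P * (C * Q) + Q * (C * Q) := by
      conv_lhs => rw [← Matrix.one_mul (C * Q), ← hPQ1, Matrix.add_mul]
    have hUV : (P * (C * Q))ᴴ * (Q * (C * Q)) = 0 := by
      simp only [conjTranspose_mul, hPH, hQH]
      have : P * (Q * (C * Q)) = 0 := by rw [← Matrix.mul_assoc, hPQ, Matrix.zero_mul]
      calc Q * Cᴴ * P * (Q * (C * Q)) = Q * Cᴴ * (P * (Q * (C * Q))) := by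
            rw [Matrix.mul_assoc]
        _ = 0 := by rw [this, Matrix.mul_zero]
    have hVU : (Q * (C * Q))ᴴ * (P * (C * Q)) = 0 := by
      simp only [conjTranspose_mul, hPH, hQH]
      have : Q * (P * (C * Q)) = 0 := by rw [← Matrix.mul_assoc, hQP, Matrix.zero_mul]
      calc Q * Cᴴ * Q * (P * (C * Q)) = Q * Cᴴ * (Q * (P * (C * Q))) := by
            rw [Matrix.mul_assoc]
        _ = 0 := by rw [this, Matrix.mul_zero]
    rw [hmat]
    conv_lhs => rw [hsplit]
    rw [conjTranspose_add, Matrix.add_mul, Matrix.mul_add, Matrix.mul_add, hUV, hVU,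
      add_zero, zero_add, trace_add, trace_conjTranspose_mul, trace_conjTranspose_mul]
  have e3 : trace (Q * (x * xᴴ) * Q) = 0 := by
    have : Q * (x * xᴴ) * Q = Q * x * (xᴴ * Q) := by simp only [Matrix.mul_assoc]
    rw [this, hQx, Matrix.zero_mul, trace_zero]
  have e4 : trace (Q * (yᴴ * y) * Q) = (fR (y * Q) : ℂ) := by
    have : Q * (yᴴ * y) * Q = (y * Q)ᴴ * (y * Q) := by
      simp only [conjTranspose_mul, hQH, Matrix.mul_assoc]
    rw [this, trace_conjTranspose_mul]
  have e5 : trace (Q * ((t : ℂ) • (1 : Matrix (Fin n) (Fin n) ℂ)) * Q) = (t : ℂ) * (fR Q : ℂ) := by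
    have h1 : Q * ((t : ℂ) • (1 : Matrix (Fin n) (Fin n) ℂ)) * Q = (t : ℂ) • Q := by
      rw [Matrix.mul_smul, Matrix.mul_one, Matrix.smul_mul, hQ2]
    rw [h1, trace_smul, smul_eq_mul]
    congr 1
    rw [← trace_conjTranspose_mul, hQH, hQ2]
  -- combine
  have key := congrArg (fun M => trace (Q * M * Q)) hreal
  simp only [Matrix.mul_sub, Matrix.sub_mul, Matrix.mul_add, Matrix.add_mul,
    trace_sub, trace_add] at key
  rw [e1 A hQAQ hAQ, e1 B hQBQ hBQ, e2 A hPAQ0, e2 B hPBQ0, e3, e4, e5] at key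
  have hre : fR (Q * (A * Q)) - (fR (P * (A * Q)) + fR (Q * (A * Q)))
      + (fR (Q * (B * Q)) - (fR (P * (B * Q)) + fR (Q * (B * Q))))
      + 0 - fR (y * Q) = t * fR Q := by
    exact_mod_cast key
  have h0 : fR Q = 0 := by
    have n1 := fR_nonneg (P * (A * Q))
    have n2 := fR_nonneg (P * (B * Q))
    have n3 := fR_nonneg (y * Q)
    have n4 := fR_nonneg Q
    nlinarith
  have hQ0 : Q = 0 := eq_zero_of_fR Q h0
  have : P = 1 - Q := by rw [hQ]; abel
  rw [this, hQ0, sub_zero]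

end Nak2

noncomputable section
namespace Nak3
open Nak Nak2

variable {n : ℕ}

lemma toE_mul {m p q : ℕ} (M : Matrix (Fin m) (Fin p) ℂ) (N : Matrix (Fin p) (Fin q) ℂ) :
    Matrix.toEuclideanLin (M * N)
      = (Matrix.toEuclideanLin M).comp (Matrix.toEuclideanLin N) := by
  apply LinearMap.ext
  intro v
  simp [Matrix.toEuclideanLin_apply, Matrix.mulVec_mulVec]

theorem main (t : ℝ) (ht : 0 < t)
    (A B : Matrix (Fin n) (Fin n) ℂ)
    (x : Matrix (Fin n) (Fin 1) ℂ) (y : Matrix (Fin 1) (Fin n) ℂ)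
    (hreal : A * Aᴴ - Aᴴ * A + (B * Bᴴ - Bᴴ * B) + x * xᴴ - yᴴ * y
      = (t : ℂ) • (1 : Matrix (Fin n) (Fin n) ℂ))
    (hcplx : A * B - B * A + x * y = 0) :
    y = 0 := by
  classical
  set S : Submodule ℂ (EuclideanSpace ℂ (Fin n)) :=
    ⨆ w : List Bool, LinearMap.range (Matrix.toEuclideanLin (wp A B w * x)) with hS
  set Pl : EuclideanSpace ℂ (Fin n) →ₗ[ℂ] EuclideanSpace ℂ (Fin n) :=
    S.subtype.comp (S.orthogonalProjectionOnto).toLinearMap with hPl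
  set P : Matrix (Fin n) (Fin n) ℂ := Matrix.toEuclideanLin.symm Pl with hPdef
  have hP : Matrix.toEuclideanLin P = Pl := Matrix.toEuclideanLin.apply_symm_apply Pl
  have hfix : ∀ v ∈ S, Pl v = v := by
    intro v hv
    simp only [hPl, LinearMap.comp_apply, ContinuousLinearMap.coe_coe, Submodule.coe_subtype]
    rw [← Submodule.starProjection_apply]
    exact Submodule.starProjection_eq_self_iff.mpr hv
  have hran : ∀ v, Pl v ∈ S := by
    intro v
    simp only [hPl, LinearMap.comp_apply, ContinuousLinearMap.coe_coe, Submodule.coe_subtype]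
    exact Submodule.coe_mem _
  have hgen : ∀ (w : List Bool) (u : EuclideanSpace ℂ (Fin 1)),
      Matrix.toEuclideanLin (wp A B w * x) u ∈ S := by
    intro w u
    exact Submodule.mem_iSup_of_mem w (LinearMap.mem_range_self _ u)
  have hSinv : ∀ (C : Matrix (Fin n) (Fin n) ℂ),
      (∀ w : List Bool, ∃ w' : List Bool, C * (wp A B w * x) = wp A B w' * x) →
      ∀ v ∈ S, Matrix.toEuclideanLin C v ∈ S := by
    intro C hC v hv
    have hle : S ≤ Submodule.comap (Matrix.toEuclideanLin C) S := by
      rw [hS]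
      apply iSup_le
      intro w
      rintro v ⟨u, rfl⟩
      obtain ⟨w', hw'⟩ := hC w
      simp only [Submodule.mem_comap]
      rw [← LinearMap.comp_apply, ← toE_mul, hw']
      exact hgen w' u
    exact hle hv
  have hSA : ∀ v ∈ S, Matrix.toEuclideanLin A v ∈ S := by
    apply hSinv
    intro w
    exact ⟨true :: w, by rw [wp_cons]; simp only [Bool.cond_true, Matrix.mul_assoc]⟩
  have hSB : ∀ v ∈ S, Matrix.toEuclideanLin B v ∈ S := by
    apply hSinv
    intro w
    exact ⟨false :: w, by rw [wp_cons]; simp only [Bool.cond_false, Matrix.mul_assoc]⟩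
  have hxmem : ∀ u, Matrix.toEuclideanLin x u ∈ S := by
    intro u
    have h1 : wp A B [] * x = x := by rw [wp_nil, Matrix.one_mul]
    have := hgen [] u
    rw [h1] at this
    exact this
  have hyS : ∀ v ∈ S, Matrix.toEuclideanLin y v = 0 := by
    intro v hv
    have hle : S ≤ LinearMap.ker (Matrix.toEuclideanLin y) := by
      rw [hS]
      apply iSup_le
      intro w
      rintro v ⟨u, rfl⟩
      simp only [LinearMap.mem_ker]
      rw [← LinearMap.comp_apply, ← toE_mul, ← Matrix.mul_assoc,
        word_lemma A B x y hcplx w]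
      simp
    exact hle hv
  have hP2 : P * P = P := by
    apply Matrix.toEuclideanLin.injective
    rw [toE_mul, hP]
    apply LinearMap.ext
    intro v
    exact hfix _ (hran v)
  have hPH : Pᴴ = P := by
    apply Matrix.toEuclideanLin.injective
    rw [Matrix.toEuclideanLin_conjTranspose_eq_adjoint, hP]
    have hsym : Pl = LinearMap.adjoint Pl := by
      rw [LinearMap.eq_adjoint_iff]
      intro u v
      simp only [hPl, LinearMap.comp_apply, ContinuousLinearMap.coe_coe, Submodule.coe_subtype]
      rw [← Submodule.starProjection_apply, ← Submodule.starProjection_apply]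
      exact Submodule.inner_starProjection_left_eq_right S u v
    exact hsym.symm
  have hPx : P * x = x := by
    apply Matrix.toEuclideanLin.injective
    rw [toE_mul, hP]
    apply LinearMap.ext
    intro u
    exact hfix _ (hxmem u)
  have hPA : P * (A * P) = A * P := by
    apply Matrix.toEuclideanLin.injective
    rw [toE_mul, toE_mul, hP]
    apply LinearMap.ext
    intro v
    exact hfix _ (hSA _ (hran v))
  have hPB : P * (B * P) = B * P := by
    apply Matrix.toEuclideanLin.injective
    rw [toE_mul, toE_mul, hP]
    apply LinearMap.ext
    intro v
    exact hfix _ (hSB _ (hran v))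
  have hyP : y * P = 0 := by
    apply Matrix.toEuclideanLin.injective
    rw [toE_mul, hP]
    apply LinearMap.ext
    intro v
    simp only [LinearMap.comp_apply, map_zero, LinearMap.zero_apply]
    exact hyS _ (hran v)
  have hP1 : P = 1 := proj_one t ht A B P x y hreal hP2 hPH hPx hPA hPB
  rw [hP1, Matrix.mul_one] at hyP
  exact hyP

end Nak3
end


/-- Nakajima's vanishing: any solution of the hyperkähler moment map equations
at level `t > 0` has `y = 0`. -/
theorem stmt_0 (n : ℕ) (t : ℝ) (ht : 0 < t)
    (A B : Matrix (Fin n) (Fin n) ℂ)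
    (x : Matrix (Fin n) (Fin 1) ℂ) (y : Matrix (Fin 1) (Fin n) ℂ)
    (hreal : A * Aᴴ - Aᴴ * A + (B * Bᴴ - Bᴴ * B) + x * xᴴ - yᴴ * y
      = (t : ℂ) • (1 : Matrix (Fin n) (Fin n) ℂ))
    (hcplx : A * B - B * A + x * y = 0) :
    y = 0 := Nak3.main t ht A B x y hreal hcplx
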